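/- Let n ≥ 2 and t > 1. The map sending z = x + iy to (√(2/(t+1))·x, √(2/(t−1))·y) is a homeomorphism from M_t^n (with its subspace topology) onto the Stiefel-type manifold V := {(x,y) ∈ ℝ^{n+1} × ℝ^{n+1} : ‖x‖ = 1, ‖y‖ = 1, ⟨x,y⟩ = 0}. -/

import Mathlib

set_option maxHeartbeats 1000000


open Complex Finset

lemma aux_sum_sq_eq_one_of_norm_one {m : ℕ} (x : EuclideanSpace ℝ (Fin m)) (hx : ‖x‖ = 1) :
    ∑ j, x j ^ 2 = 1 := by
  have h := EuclideanSpace.norm_eq x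
  rw [hx] at h
  have hnn : 0 ≤ ∑ i, ‖x i‖ ^ 2 := Finset.sum_nonneg fun i _ => sq_nonneg _
  have h1 : ∑ i, ‖x i‖ ^ 2 = 1 := by nlinarith [Real.sq_sqrt hnn]
  simpa [Real.norm_eq_abs, _root_.sq_abs] using h1

lemma aux_norm_one_of_sum_sq {m : ℕ} (x : EuclideanSpace ℝ (Fin m)) (hx : ∑ j, x j ^ 2 = 1) :
    ‖x‖ = 1 := by
  rw [EuclideanSpace.norm_eq]
  simp only [Real.norm_eq_abs, _root_.sq_abs]
  rw [hx, Real.sqrt_one]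

lemma aux_inner_eq {m : ℕ} (x y : EuclideanSpace ℝ (Fin m)) : inner ℝ x y = ∑ j, x j * y j := by
  simp [PiLp.inner_apply, RCLike.inner_apply, mul_comm]

lemma aux_key {m : ℕ} (t : ℝ) (z : EuclideanSpace ℂ (Fin m))
    (h1 : (∑ j, (z j) ^ 2) = 1) (h2 : (∑ j, ‖z j‖ ^ 2) = t) :
    (∑ j, (z j).re ^ 2) = (t + 1) / 2 ∧ (∑ j, (z j).im ^ 2) = (t - 1) / 2 ∧
      (∑ j, (z j).re * (z j).im) = 0 := by
  have hre : (∑ j, ((z j).re ^ 2 - (z j).im ^ 2)) = 1 := by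
    have := congrArg Complex.re h1
    simpa [Complex.re_sum, pow_two, Complex.mul_re] using this
  have him : (∑ j, (z j).re * (z j).im) = 0 := by
    have := congrArg Complex.im h1
    simp only [Complex.im_sum, pow_two, Complex.mul_im, Complex.one_im] at this
    have h2' : (∑ j, 2 * ((z j).re * (z j).im)) = 0 := by
      rw [← this]; congr 1; funext j; ring
    rw [← Finset.mul_sum] at h2'
    linarith [h2']
  have habs : (∑ j, ((z j).re ^ 2 + (z j).im ^ 2)) = t := by
    rw [← h2]
    refine Finset.sum_congr rfl fun j _ => ?_
    rw [Complex.sq_norm, Complex.normSq_apply]; ring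
  rw [Finset.sum_sub_distrib] at hre
  rw [Finset.sum_add_distrib] at habs
  refine ⟨by linarith, by linarith, him⟩

/-- For `n ≥ 2`, `t > 1`, the map `z = x + iy ↦ (√(2/(t+1))·x, √(2/(t−1))·y)`
is a homeomorphism from `M_t^n` onto
`V = {(x,y) ∈ ℝ^{n+1} × ℝ^{n+1} : ‖x‖ = 1, ‖y‖ = 1, ⟨x,y⟩ = 0}`. -/
theorem stmt_1 (n : ℕ) (hn : 2 ≤ n) (t : ℝ) (ht : 1 < t) :
    ∃ h : ({z : EuclideanSpace ℂ (Fin (n + 1)) |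
        (∑ j, (z j) ^ 2) = 1 ∧ (∑ j, ‖z j‖ ^ 2) = t} ≃ₜ
        {p : EuclideanSpace ℝ (Fin (n + 1)) × EuclideanSpace ℝ (Fin (n + 1)) |
        ‖p.1‖ = 1 ∧ ‖p.2‖ = 1 ∧ inner ℝ p.1 p.2 = (0 : ℝ)}),
      ∀ z : {z : EuclideanSpace ℂ (Fin (n + 1)) |
          (∑ j, (z j) ^ 2) = 1 ∧ (∑ j, ‖z j‖ ^ 2) = t},
        (∀ j, (h z).val.1 j = Real.sqrt (2 / (t + 1)) * ((z : EuclideanSpace ℂ (Fin (n + 1))) j).re) ∧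
        (∀ j, (h z).val.2 j = Real.sqrt (2 / (t - 1)) * ((z : EuclideanSpace ℂ (Fin (n + 1))) j).im) := by
  have ht1 : (0:ℝ) < t + 1 := by linarith
  have ht2 : (0:ℝ) < t - 1 := by linarith
  set sa := Real.sqrt (2 / (t + 1)) with hsa
  set sb := Real.sqrt (2 / (t - 1)) with hsb
  set a := Real.sqrt ((t + 1) / 2) with ha
  set b := Real.sqrt ((t - 1) / 2) with hb
  have hsa2 : sa ^ 2 = 2 / (t + 1) := Real.sq_sqrt (by positivity)
  have hsb2 : sb ^ 2 = 2 / (t - 1) := Real.sq_sqrt (by positivity)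
  have ha2 : a ^ 2 = (t + 1) / 2 := Real.sq_sqrt (by positivity)
  have hb2 : b ^ 2 = (t - 1) / 2 := Real.sq_sqrt (by positivity)
  have hsaa : sa * a = 1 := by
    rw [hsa, ha, ← Real.sqrt_mul (by positivity),
      show 2 / (t + 1) * ((t + 1) / 2) = 1 by field_simp, Real.sqrt_one]
  have hsbb : sb * b = 1 := by
    rw [hsb, hb, ← Real.sqrt_mul (by positivity),
      show 2 / (t - 1) * ((t - 1) / 2) = 1 by field_simp, Real.sqrt_one]
  -- forward membership
  have memV : ∀ (z : EuclideanSpace ℂ (Fin (n + 1)))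
      (x y : EuclideanSpace ℝ (Fin (n + 1))),
      (∀ j, x j = sa * (z j).re) → (∀ j, y j = sb * (z j).im) →
      (∑ j, (z j) ^ 2) = 1 → (∑ j, ‖z j‖ ^ 2) = t →
      ‖x‖ = 1 ∧ ‖y‖ = 1 ∧ inner ℝ x y = (0:ℝ) := by
    intro z x y hx hy h1 h2
    obtain ⟨k1, k2, k3⟩ := aux_key t z h1 h2
    refine ⟨aux_norm_one_of_sum_sq _ ?_, aux_norm_one_of_sum_sq _ ?_, ?_⟩
    · have e : (∑ j, x j ^ 2) = sa ^ 2 * ∑ j, (z j).re ^ 2 := by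
        rw [Finset.mul_sum]; exact Finset.sum_congr rfl fun j _ => by rw [hx j]; ring
      rw [e, k1, hsa2]; field_simp
    · have e : (∑ j, y j ^ 2) = sb ^ 2 * ∑ j, (z j).im ^ 2 := by
        rw [Finset.mul_sum]; exact Finset.sum_congr rfl fun j _ => by rw [hy j]; ring
      rw [e, k2, hsb2]; field_simp
    · rw [aux_inner_eq]
      have e : (∑ j, x j * y j) = sa * sb * ∑ j, (z j).re * (z j).im := by
        rw [Finset.mul_sum]; exact Finset.sum_congr rfl fun j _ => by rw [hx j, hy j]; ring
      rw [e, k3, mul_zero]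
  -- inverse membership
  have memM : ∀ (x y : EuclideanSpace ℝ (Fin (n + 1)))
      (z : EuclideanSpace ℂ (Fin (n + 1))),
      (∀ j, z j = ((a * x j : ℝ) + (b * y j : ℝ) * Complex.I : ℂ)) →
      ‖x‖ = 1 → ‖y‖ = 1 → inner ℝ x y = (0:ℝ) →
      (∑ j, (z j) ^ 2) = 1 ∧ (∑ j, ‖z j‖ ^ 2) = t := by
    intro x y z hz hp1 hp2 hp3
    have s1 : (∑ j, x j ^ 2) = 1 := aux_sum_sq_eq_one_of_norm_one _ hp1
    have s2 : (∑ j, y j ^ 2) = 1 := aux_sum_sq_eq_one_of_norm_one _ hp2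
    have s3 : (∑ j, x j * y j) = 0 := by rw [aux_inner_eq] at hp3; exact hp3
    have hre : ∀ j, (z j).re = a * x j := fun j => by rw [hz j]; simp
    have him : ∀ j, (z j).im = b * y j := fun j => by rw [hz j]; simp
    constructor
    · rw [Complex.ext_iff]
      constructor
      · rw [Complex.re_sum, Complex.one_re]
        have e : (∑ j, ((z j) ^ 2).re) = ∑ j, (a ^ 2 * x j ^ 2 - b ^ 2 * y j ^ 2) := by
          refine Finset.sum_congr rfl fun j _ => ?_
          rw [pow_two, Complex.mul_re, hre j, him j]; ring
        rw [e, Finset.sum_sub_distrib, ← Finset.mul_sum, ← Finset.mul_sum, s1, s2, ha2, hb2]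
        ring
      · rw [Complex.im_sum, Complex.one_im]
        have e : (∑ j, ((z j) ^ 2).im) = ∑ j, (2 * a * b) * (x j * y j) := by
          refine Finset.sum_congr rfl fun j _ => ?_
          rw [pow_two, Complex.mul_im, hre j, him j]; ring
        rw [e, ← Finset.mul_sum, s3, mul_zero]
    · have e : (∑ j, ‖z j‖ ^ 2) = ∑ j, (a ^ 2 * x j ^ 2 + b ^ 2 * y j ^ 2) := by
        refine Finset.sum_congr rfl fun j _ => ?_
        rw [Complex.sq_norm, Complex.normSq_apply, hre j, him j]; ring
      rw [e, Finset.sum_add_distrib, ← Finset.mul_sum, ← Finset.mul_sum, s1, s2, ha2, hb2]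
      ring
  refine ⟨{
    toFun := fun z => ⟨(WithLp.toLp 2 (fun j => sa * ((z : EuclideanSpace ℂ (Fin (n+1))) j).re),
        WithLp.toLp 2 (fun j => sb * ((z : EuclideanSpace ℂ (Fin (n+1))) j).im)),
      memV z _ _ (fun j => rfl) (fun j => rfl) z.2.1 z.2.2⟩
    invFun := fun p => ⟨WithLp.toLp 2 (fun j => ((a * p.val.1 j : ℝ) + (b * p.val.2 j : ℝ) * Complex.I : ℂ)),
      memM p.val.1 p.val.2 _ (fun j => rfl) p.2.1 p.2.2.1 p.2.2.2⟩
    left_inv := ?_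
    right_inv := ?_
    continuous_toFun := ?_
    continuous_invFun := ?_ }, ?_⟩
  · intro z
    apply Subtype.ext
    ext j
    apply Complex.ext
    · simp
      rw [← mul_assoc, mul_comm a sa, hsaa, one_mul]
    · simp
      rw [← mul_assoc, mul_comm b sb, hsbb, one_mul]
  · intro p
    apply Subtype.ext
    apply Prod.ext
    · ext j
      show sa * (((a * p.val.1 j : ℝ) + (b * p.val.2 j : ℝ) * Complex.I : ℂ)).re
          = p.val.1 j
      simp
      rw [← mul_assoc, hsaa, one_mul]
    · ext j
      show sb * (((a * p.val.1 j : ℝ) + (b * p.val.2 j : ℝ) * Complex.I : ℂ)).im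
          = p.val.2 j
      simp
      rw [← mul_assoc, hsbb, one_mul]
  · apply Continuous.subtype_mk
    apply Continuous.prodMk
    · exact (PiLp.continuous_toLp 2 _).comp (continuous_pi fun j => continuous_const.mul
        (Complex.continuous_re.comp ((continuous_apply j).comp ((PiLp.continuous_ofLp 2 _).comp continuous_subtype_val))))
    · exact (PiLp.continuous_toLp 2 _).comp (continuous_pi fun j => continuous_const.mul
        (Complex.continuous_im.comp ((continuous_apply j).comp ((PiLp.continuous_ofLp 2 _).comp continuous_subtype_val))))
  · apply Continuous.subtype_mk
    refine (PiLp.continuous_toLp 2 _).comp (continuous_pi fun j => Continuous.add ?_ (Continuous.mul ?_ continuous_const))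
    · exact Complex.continuous_ofReal.comp (continuous_const.mul
        ((continuous_apply j).comp ((PiLp.continuous_ofLp 2 _).comp (continuous_fst.comp continuous_subtype_val))))
    · exact Complex.continuous_ofReal.comp (continuous_const.mul
        ((continuous_apply j).comp ((PiLp.continuous_ofLp 2 _).comp (continuous_snd.comp continuous_subtype_val))))
  · intro z
    exact ⟨fun j => rfl, fun j => rfl⟩
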